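/- For every positive integer t, ∑_{k=0}^{t−1} I_k ≤ (⌊m⌋/(⌊m⌋+1)) ∑_{k=0}^{t−1} U_k Θ_k + (⌊m⌋/(⌊m⌋+1)) ∑_{k=0}^{t−1} U_k (1 − Θ_k) + t/(⌊m⌋+1). -/

import Mathlib

open Finset


lemma true_iter_aux_core (γinc γdec : ℝ) (hinc : 1 < γinc) (hdec0 : 0 < γdec) (hdec1 : γdec < 1)
    (n : ℤ) (hn : 0 < n) (hnm : (n : ℝ) * (-Real.log γdec) ≤ Real.log γinc)
    (Θ : ℕ → ℝ) (hΘ : ∀ k, Θ k = 0 ∨ Θ k = 1)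
    (α : ℕ → ℝ) (hpos : ∀ k, 0 < α k)
    (hrec : ∀ k, α (k + 1) = if Θ k = 1 then γinc * α k else γdec * α k)
    (abar : ℝ) (habar0 : 0 < abar) (habar : abar ≤ α 0)
    (U : ℕ → ℝ)
    (hU : ∀ k, U k = if max (α k) (α (k + 1)) ≤ abar then 0 else 1)
    (t : ℕ) :
    (n : ℝ) * ∑ k ∈ Finset.range t, (1 - U k) * Θ k
      ≤ ∑ k ∈ Finset.range t, (1 - U k) * (1 - Θ k) := by
  have ha : 0 < Real.log γinc := Real.log_pos hinc
  have hd : Real.log γdec < 0 := Real.log_neg hdec0 hdec1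
  set a := Real.log γinc with ha_def
  set d := Real.log γdec with hd_def
  have hN : (0 : ℝ) < (n : ℝ) := by exact_mod_cast hn
  set ψ : ℕ → ℝ := fun k => (n : ℝ) * (Real.log (abar * γdec) - Real.log (α k)) / a with hψ
  set Φ : ℕ → ℤ := fun k => max (⌊ψ k⌋ + 1) 0 with hΦ
  have hBd : Real.log (abar * γdec) = Real.log abar + d :=
    Real.log_mul (ne_of_gt habar0) (ne_of_gt hdec0)
  -- ψ recurrences
  have hψsucc : ∀ k, Θ k = 1 → ψ (k + 1) = ψ k - (n : ℝ) := by
    intro k h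
    simp only [hψ]
    rw [hrec k, if_pos h, Real.log_mul (by linarith : γinc ≠ 0) (ne_of_gt (hpos k))]
    field_simp
    ring
  have hψfail : ∀ k, Θ k = 0 → ψ (k + 1) = ψ k + (n : ℝ) * (-d) / a := by
    intro k h
    have h' : ¬ Θ k = 1 := by rw [h]; norm_num
    simp only [hψ]
    rw [hrec k, if_neg h', Real.log_mul (ne_of_gt hdec0) (ne_of_gt (hpos k))]
    field_simp
    ring
  -- initial potential
  have hΦ0 : Φ 0 = 0 := by
    have h1 : abar * γdec < α 0 := by nlinarith
    have h2 : ψ 0 < 0 := by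
      simp only [hψ]
      apply div_neg_of_neg_of_pos _ ha
      have := Real.log_lt_log (by positivity) h1
      nlinarith
    have h3 : ⌊ψ 0⌋ < 0 := Int.floor_lt.2 (by exact_mod_cast h2)
    simp only [hΦ]
    omega
  -- per-step inequality
  have step : ∀ k, (n : ℝ) * ((1 - U k) * Θ k) + ((Φ (k + 1) : ℤ) : ℝ)
      ≤ (1 - U k) * (1 - Θ k) + ((Φ k : ℤ) : ℝ) := by
    intro k
    by_cases hsm : max (α k) (α (k + 1)) ≤ abar
    · have hUk : U k = 0 := by rw [hU k, if_pos hsm]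
      rcases hΘ k with h0 | h1
      · -- small failure
        have hc1 : (n : ℝ) * (-d) / a ≤ 1 := (div_le_one ha).2 hnm
        have hc0 : 0 ≤ (n : ℝ) * (-d) / a :=
          div_nonneg (mul_nonneg hN.le (by linarith)) ha.le
        have hfl : ⌊ψ (k + 1)⌋ ≤ ⌊ψ k⌋ + 1 := by
          have : ψ (k + 1) ≤ ψ k + 1 := by rw [hψfail k h0]; linarith
          calc ⌊ψ (k + 1)⌋ ≤ ⌊ψ k + 1⌋ := Int.floor_le_floor this
            _ = ⌊ψ k⌋ + 1 := Int.floor_add_one _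
        have hint : Φ (k + 1) ≤ 1 + Φ k := by simp only [hΦ]; omega
        rw [hUk, h0]
        push_cast
        have : ((Φ (k + 1) : ℤ) : ℝ) ≤ 1 + ((Φ k : ℤ) : ℝ) := by exact_mod_cast hint
        linarith
      · -- small success
        have hs2 : α (k + 1) ≤ abar := le_trans (le_max_right _ _) hsm
        have hak1 : α (k + 1) = γinc * α k := by rw [hrec k, if_pos h1]
        have hlogle : a + Real.log (α k) ≤ Real.log abar := by
          have : Real.log (γinc * α k) ≤ Real.log abar := by
            apply Real.log_le_log (mul_pos (by linarith) (hpos k))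
            rw [← hak1]; exact hs2
          rwa [Real.log_mul (by linarith) (ne_of_gt (hpos k))] at this
        have hψlow : (n : ℝ) - 1 ≤ ψ k := by
          simp only [hψ]
          rw [le_div_iff₀ ha, hBd]
          have h5 : (n : ℝ) * (a + Real.log (α k)) ≤ (n : ℝ) * Real.log abar :=
            mul_le_mul_of_nonneg_left hlogle hN.le
          nlinarith
        have hlow : n - 1 ≤ ⌊ψ k⌋ := Int.le_floor.2 (by push_cast; linarith)
        have hfl1 : ⌊ψ (k + 1)⌋ = ⌊ψ k⌋ - n := by
          rw [hψsucc k h1]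
          exact_mod_cast Int.floor_sub_intCast (ψ k) n
        have hint : n + Φ (k + 1) ≤ Φ k := by simp only [hΦ]; omega
        rw [hUk, h1]
        push_cast
        have : ((n : ℤ) : ℝ) + ((Φ (k + 1) : ℤ) : ℝ) ≤ ((Φ k : ℤ) : ℝ) := by exact_mod_cast hint
        push_cast at this
        linarith
    · have hUk : U k = 1 := by rw [hU k, if_neg hsm]
      rcases hΘ k with h0 | h1
      · -- large failure
        have hak1 : α (k + 1) = γdec * α k := by
          rw [hrec k, if_neg (by rw [h0]; norm_num)]
        have habk : abar < α k := by
          push_neg at hsm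
          rcases lt_max_iff.mp hsm with h | h
          · exact h
          · have : α (k + 1) < α k := by rw [hak1]; nlinarith [hpos k]
            linarith
        have h1' : abar * γdec < α (k + 1) := by rw [hak1]; nlinarith
        have h2 : ψ (k + 1) < 0 := by
          simp only [hψ]
          apply div_neg_of_neg_of_pos _ ha
          have := Real.log_lt_log (by positivity) h1'
          nlinarith
        have h3 : ⌊ψ (k + 1)⌋ < 0 := Int.floor_lt.2 (by exact_mod_cast h2)
        have hint : Φ (k + 1) ≤ Φ k := by simp only [hΦ]; omega
        rw [hUk, h0]
        push_cast
        have : ((Φ (k + 1) : ℤ) : ℝ) ≤ ((Φ k : ℤ) : ℝ) := by exact_mod_cast hint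
        linarith
      · -- large success
        have hfl1 : ⌊ψ (k + 1)⌋ = ⌊ψ k⌋ - n := by
          rw [hψsucc k h1]
          exact_mod_cast Int.floor_sub_intCast (ψ k) n
        have hint : Φ (k + 1) ≤ Φ k := by simp only [hΦ]; omega
        rw [hUk, h1]
        push_cast
        have : ((Φ (k + 1) : ℤ) : ℝ) ≤ ((Φ k : ℤ) : ℝ) := by exact_mod_cast hint
        linarith
  -- telescoping induction
  have core : ∀ s : ℕ, (n : ℝ) * ∑ k ∈ Finset.range s, (1 - U k) * Θ k + ((Φ s : ℤ) : ℝ)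
      ≤ ∑ k ∈ Finset.range s, (1 - U k) * (1 - Θ k) := by
    intro s
    induction s with
    | zero => simp [hΦ0]
    | succ s ih =>
      rw [Finset.sum_range_succ, Finset.sum_range_succ, mul_add]
      linarith [step s]
  have hΦt : (0 : ℝ) ≤ ((Φ t : ℤ) : ℝ) := by
    have : (0 : ℤ) ≤ Φ t := le_max_right _ _
    exact_mod_cast this
  linarith [core t]

/-- Bound on the number of true iterations among the first t iterations. -/
theorem true_iterations_bound
    (γinc γdec : ℝ) (hinc : 1 < γinc) (hdec0 : 0 < γdec) (hdec1 : γdec < 1)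
    (m : ℝ) (hm : m = -Real.log γinc / Real.log γdec)
    (Θ : ℕ → ℝ) (hΘ : ∀ k, Θ k = 0 ∨ Θ k = 1)
    (α : ℕ → ℝ) (α₀ : ℝ) (hα₀ : 0 < α₀) (hinit : α 0 = α₀)
    (hrec : ∀ k, α (k + 1) = if Θ k = 1 then γinc * α k else γdec * α k)
    (abar : ℝ) (habar0 : 0 < abar) (habar : abar ≤ α₀)
    (U : ℕ → ℝ)
    (hU : ∀ k, U k = if max (α k) (α (k + 1)) ≤ abar then 0 else 1)
    (I : ℕ → ℝ) (hI : ∀ k, I k = 0 ∨ I k = 1)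
    (hsmalltrue : ∀ k, I k = 1 → U k = 0 → Θ k = 1)
    (t : ℕ) (ht : 0 < t) :
    ∑ k ∈ Finset.range t, I k
      ≤ ((⌊m⌋ : ℝ) / ((⌊m⌋ : ℝ) + 1)) * ∑ k ∈ Finset.range t, U k * Θ k
        + ((⌊m⌋ : ℝ) / ((⌊m⌋ : ℝ) + 1)) * ∑ k ∈ Finset.range t, U k * (1 - Θ k)
        + (t : ℝ) / ((⌊m⌋ : ℝ) + 1) := by
  have ha : 0 < Real.log γinc := Real.log_pos hinc
  have hd : Real.log γdec < 0 := Real.log_neg hdec0 hdec1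
  have hmalt : m = Real.log γinc / (-Real.log γdec) := by rw [hm]; ring
  have hm0 : 0 < m := by
    rw [hmalt]
    exact div_pos ha (by linarith)
  have hfl0 : (0 : ℤ) ≤ ⌊m⌋ := Int.floor_nonneg.2 hm0.le
  have hN0 : (0 : ℝ) ≤ (⌊m⌋ : ℝ) := by exact_mod_cast hfl0
  have hNm : (⌊m⌋ : ℝ) ≤ m := Int.floor_le m
  have hU01 : ∀ k, U k = 0 ∨ U k = 1 := by
    intro k; rw [hU k]; split <;> simp
  have hpos : ∀ k, 0 < α k := by
    intro k
    induction k with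
    | zero => rw [hinit]; exact hα₀
    | succ k ih =>
      rw [hrec k]
      split
      · exact mul_pos (by linarith) ih
      · exact mul_pos hdec0 ih
  -- key inequality: ⌊m⌋ · (#small successes) ≤ #small failures
  have key : (⌊m⌋ : ℝ) * ∑ k ∈ Finset.range t, (1 - U k) * Θ k
      ≤ ∑ k ∈ Finset.range t, (1 - U k) * (1 - Θ k) := by
    have hFnn : ∀ k ∈ Finset.range t, 0 ≤ (1 - U k) * (1 - Θ k) := by
      intro k _
      rcases hU01 k with h | h <;> rcases hΘ k with h2 | h2 <;> rw [h, h2] <;> norm_num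
    rcases eq_or_lt_of_le hfl0 with h0 | hposn
    · rw [← h0]
      push_cast
      rw [zero_mul]
      exact Finset.sum_nonneg hFnn
    · have hnm : ((⌊m⌋ : ℤ) : ℝ) * (-Real.log γdec) ≤ Real.log γinc := by
        have h4 : (⌊m⌋ : ℝ) ≤ Real.log γinc / (-Real.log γdec) := by
          rw [← hmalt]
          exact hNm
        exact (le_div_iff₀ (by linarith)).mp h4
      exact true_iter_aux_core γinc γdec hinc hdec0 hdec1 ⌊m⌋ hposn hnm Θ hΘ α hpos hrec
        abar habar0 (by rw [hinit]; exact habar) U hU t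
  -- pointwise: I ≤ U + (1-U)Θ
  have h1 : ∑ k ∈ Finset.range t, I k
      ≤ ∑ k ∈ Finset.range t, U k + ∑ k ∈ Finset.range t, (1 - U k) * Θ k := by
    rw [← Finset.sum_add_distrib]
    apply Finset.sum_le_sum
    intro k _
    rcases hI k with hIk | hIk
    · rcases hU01 k with hUk | hUk <;> rcases hΘ k with hTk | hTk <;>
        rw [hIk, hUk, hTk] <;> norm_num
    · rcases hU01 k with hUk | hUk
      · have hTk := hsmalltrue k hIk hUk
        rw [hIk, hUk, hTk]; norm_num
      · rcases hΘ k with hTk | hTk <;> rw [hIk, hUk, hTk] <;> norm_num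
  -- total count
  have hsum1 : ∑ k ∈ Finset.range t, U k + ∑ k ∈ Finset.range t, (1 - U k) * Θ k
      + ∑ k ∈ Finset.range t, (1 - U k) * (1 - Θ k) = (t : ℝ) := by
    rw [← Finset.sum_add_distrib, ← Finset.sum_add_distrib]
    have : ∀ k ∈ Finset.range t, U k + (1 - U k) * Θ k + (1 - U k) * (1 - Θ k) = 1 := by
      intro k _; ring
    rw [Finset.sum_congr rfl this, Finset.sum_const, Finset.card_range, nsmul_eq_mul, mul_one]
  have hsplitU : ∑ k ∈ Finset.range t, U k * Θ k + ∑ k ∈ Finset.range t, U k * (1 - Θ k)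
      = ∑ k ∈ Finset.range t, U k := by
    rw [← Finset.sum_add_distrib]
    exact Finset.sum_congr rfl (fun k _ => by ring)
  have hN1 : 0 < (⌊m⌋ : ℝ) + 1 := by linarith
  have hrhs : ((⌊m⌋ : ℝ) / ((⌊m⌋ : ℝ) + 1)) * ∑ k ∈ Finset.range t, U k * Θ k
        + ((⌊m⌋ : ℝ) / ((⌊m⌋ : ℝ) + 1)) * ∑ k ∈ Finset.range t, U k * (1 - Θ k)
        + (t : ℝ) / ((⌊m⌋ : ℝ) + 1)
      = ((⌊m⌋ : ℝ) * ∑ k ∈ Finset.range t, U k + (t : ℝ)) / ((⌊m⌋ : ℝ) + 1) := by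
    rw [← hsplitU]
    field_simp
  rw [hrhs, le_div_iff₀ hN1]
  have h2 := mul_le_mul_of_nonneg_right h1 hN1.le
  have h3 : (∑ k ∈ Finset.range t, U k + ∑ k ∈ Finset.range t, (1 - U k) * Θ k) * ((⌊m⌋ : ℝ) + 1)
      = (⌊m⌋ : ℝ) * ∑ k ∈ Finset.range t, U k + ∑ k ∈ Finset.range t, U k
        + (⌊m⌋ : ℝ) * ∑ k ∈ Finset.range t, (1 - U k) * Θ k
        + ∑ k ∈ Finset.range t, (1 - U k) * Θ k := by ring
  linarith
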